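/- (Chow–Gessel type identity for G(r,n)) For all positive integers r, n, as formal power series in t, q, a: Σ_{γ ∈ G(r,n)} t^{des_G(γ)} q^{maj(γ)} a^{col(γ)} / Π_{i=0}^{n}(1 − t q^{i}) = Σ_{k ≥ 0} t^k ([k+1]_q + a[r−1]_a [k]_q)^n, where [m]_q = 1+q+...+q^{m−1} and [r−1]_a = 1+a+...+a^{r−2}. -/

import Mathlib

open Finset

namespace Paper

/-- An element of `G(r,n) = ℤ_r ≀ S_n`: a pair (underlying permutation, color vector). -/
abbrev CPerm (r n : ℕ) := Equiv.Perm (Fin n) × (Fin n → Fin r)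

/-- A colored sequence: values and colors. -/
abbrev CSeq (r n : ℕ) := (Fin n → ℕ) × (Fin n → Fin r)

variable {r n : ℕ}

/-- The order on colored integers (value, color):
`n^{r-1} < ⋯ < n^1 < ⋯ < 1^{r-1} < ⋯ < 1^1 < 0 < 1 < ⋯ < n`.
`clt a b` means `a < b`. -/
def clt (a b : ℕ × ℕ) : Prop :=
  (0 < a.2 ∧ b.2 = 0) ∨
  (0 < a.2 ∧ 0 < b.2 ∧ (b.1 < a.1 ∨ (a.1 = b.1 ∧ b.2 < a.2))) ∨
  (a.2 = 0 ∧ b.2 = 0 ∧ a.1 < b.1)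

instance (a b : ℕ × ℕ) : Decidable (clt a b) := by unfold clt; exact inferInstance

/-- The colored entry of `γ` at (0-based) position `i`: value `σ(i)` (1-based) with its color. -/
def entry (γ : CPerm r n) (i : Fin n) : ℕ × ℕ := ((γ.1 i : ℕ) + 1, (γ.2 i : ℕ))

/-- Window value `γ(i)` for `i ∈ [0,n]` (1-based positions), with `γ(0) := 0`. -/
def wval (γ : CPerm r n) (i : ℕ) : ℕ × ℕ :=
  if h : 1 ≤ i ∧ i ≤ n then ((γ.1 ⟨i - 1, by omega⟩ : ℕ) + 1, (γ.2 ⟨i - 1, by omega⟩ : ℕ))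
  else (0, 0)

/-- Descent set `Des_G(γ) = {i ∈ [0,n-1] : γ(i) > γ(i+1)}`, with `γ(0) := 0`. -/
def DesG (γ : CPerm r n) : Finset ℕ :=
  (range n).filter fun i => clt (wval γ (i + 1)) (wval γ i)

def desG (γ : CPerm r n) : ℕ := (DesG γ).card

def majG (γ : CPerm r n) : ℕ := ∑ i ∈ DesG γ, i

def colG (γ : CPerm r n) : ℕ := ∑ i, (γ.2 i : ℕ)

/-- Number of inversions: pairs `i < j` with `γ(i) > γ(j)` in the colored order. -/
def invG (γ : CPerm r n) : ℕ :=
  ((univ : Finset (Fin n × Fin n)).filter fun p =>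
    p.1 < p.2 ∧ clt (entry γ p.2) (entry γ p.1)).card

/-- Length `ℓ_G(γ) = inv(γ) + Σ_{c_i ≠ 0} (σ(i) + c_i - 1)` (σ(i) 1-based). -/
def lenG (γ : CPerm r n) : ℕ :=
  invG γ + ∑ i ∈ univ.filter (fun i => (γ.2 i : ℕ) ≠ 0), ((γ.1 i : ℕ) + (γ.2 i : ℕ))

/-- Membership in `N_0^{(r,n)}`: a zero value has color 0. -/
def ValidSeq (f : CSeq r n) : Prop := ∀ i, f.1 i = 0 → (f.2 i : ℕ) = 0

/-- The defining property of `π(f) = γ = (c;σ)`: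
`f_{σ(1)} ≤ … ≤ f_{σ(n)}`, `c_i(γ) = c_{σ(i)}(f)`, and `γ(i) < γ(i+1)` whenever
`f_{σ(i)} = f_{σ(i+1)}`. -/
def isPi (f : CSeq r n) (γ : CPerm r n) : Prop :=
  (∀ i j : Fin n, i ≤ j → f.1 (γ.1 i) ≤ f.1 (γ.1 j)) ∧
  (∀ i, γ.2 i = f.2 (γ.1 i)) ∧
  (∀ i j : Fin n, (i : ℕ) + 1 = (j : ℕ) → f.1 (γ.1 i) = f.1 (γ.1 j) →
    clt (entry γ i) (entry γ j))

def maxf (f : CSeq r n) : ℕ := univ.sup f.1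

def sumf (f : CSeq r n) : ℕ := ∑ i, f.1 i

/-- The partition `λ(f)` (relative to `γ = π(f)`), with values in `ℤ`:
`λ_i = f_{σ(i)} - #{j ∈ Des_G(γ) : j ≤ i-1}` (1-based `i`). -/
def lamZ (f : CSeq r n) (γ : CPerm r n) (i : Fin n) : ℤ :=
  (f.1 (γ.1 i) : ℤ) - ((DesG γ).filter (· ≤ (i : ℕ))).card

/-- 1-based reading of an `n`-tuple, with value `0` at index `0` (and outside `[1,n]`). -/
def mval (μ : Fin n → ℕ) (i : ℕ) : ℕ :=
  if h : 1 ≤ i ∧ i ≤ n then μ ⟨i - 1, by omega⟩ else 0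

/-- `μ` is `γ`-compatible: `μ_i < μ_{i+1}` for all `i ∈ Des_G(γ)` (with `μ_0 := 0`). -/
def compat (μ : Fin n → ℕ) (γ : CPerm r n) : Prop :=
  ∀ i ∈ DesG γ, mval μ i < mval μ (i + 1)

/-- The skew inverse `γ̃⁻¹ = (c_{σ⁻¹(1)},…,c_{σ⁻¹(n)}; σ⁻¹)`. -/
def skewInv (γ : CPerm r n) : CPerm r n := (γ.1⁻¹, fun i => γ.2 (γ.1⁻¹ i))

/-- The group inverse: `γ⁻¹ = (c'; σ⁻¹)` with `c'_i = (r - c_{σ⁻¹(i)}) mod r`. -/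
def cinv (γ : CPerm r n) : CPerm r n :=
  (γ.1⁻¹, fun i =>
    ⟨(r - (γ.2 (γ.1⁻¹ i) : ℕ)) % r,
      Nat.mod_lt _ (Nat.lt_of_le_of_lt (Nat.zero_le _) (γ.2 (γ.1⁻¹ i)).isLt)⟩)

/-- The group law of `G(r,n)`: `(c;σ)·(d;τ) = ((d_i + c_{τ(i)}) mod r; στ)`. -/
def cmul (x y : CPerm r n) : CPerm r n :=
  (x.1 * y.1, fun i =>
    ⟨((y.2 i : ℕ) + (x.2 (y.1 i) : ℕ)) % r,
      Nat.mod_lt _ (Nat.lt_of_le_of_lt (Nat.zero_le _) (y.2 i).isLt)⟩)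

/-- The color-forgetting projection `φ : G(r,n) → B_n = G(2,n)`. -/
def phi (γ : CPerm r n) : CPerm 2 n := (γ.1, fun i => ⟨min (γ.2 i : ℕ) 1, by omega⟩)

/-- `[m]_p = 1 + p + ⋯ + p^{m-1}`. -/
def qint {R : Type*} [CommRing R] (p : R) (m : ℕ) : R := ∑ j ∈ range m, p ^ j

/-- `[m]_p! = [1]_p [2]_p ⋯ [m]_p`. -/
def qfact {R : Type*} [CommRing R] (p : R) (m : ℕ) : R := ∏ j ∈ range m, qint p (j + 1)

/-- `[m̂]_{b,p}! = (1+bp)(1+bp²)⋯(1+bp^m)·[m]_p!`. -/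
def hqfact {R : Type*} [CommRing R] (b p : R) (m : ℕ) : R :=
  (∏ i ∈ range m, (1 + b * p ^ (i + 1))) * qfact p m

/-- A formal power series in two variables `X 0, X 1` from its coefficients. -/
def seriesOf2 (F : ℕ → ℕ → ℚ) : MvPowerSeries (Fin 2) ℚ := fun d => F (d 0) (d 1)

/-- A formal power series in three variables from its coefficients. -/
def seriesOf3 (F : ℕ → ℕ → ℕ → ℚ) : MvPowerSeries (Fin 3) ℚ := fun d => F (d 0) (d 1) (d 2)


/-! ### keys -/

lemma clt_total (a b : ℕ × ℕ) : a = b ∨ clt a b ∨ clt b a := by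
  rcases a with ⟨a1, a2⟩; rcases b with ⟨b1, b2⟩
  simp only [clt, Prod.mk.injEq]
  omega

lemma clt_asymm {a b : ℕ × ℕ} (h : clt a b) (h' : clt b a) : False := by
  rcases a with ⟨a1, a2⟩; rcases b with ⟨b1, b2⟩
  simp only [clt] at h h'
  omega

def keyE (r : ℕ) (e : ℕ × ℕ) : ℤ := if e.2 = 0 then (e.1 : ℤ) else -((e.1 : ℤ) * r + e.2)

lemma keyE_lt_iff {a b : ℕ × ℕ} (ha : a.2 < r) (hb : b.2 < r) :
    keyE r a < keyE r b ↔ clt a b := by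
  rcases a with ⟨a1, a2⟩; rcases b with ⟨b1, b2⟩
  simp only [keyE, clt] at *
  have h1 : (0:ℤ) ≤ (a1 : ℤ) * r := by positivity
  have h2 : (0:ℤ) ≤ (b1 : ℤ) * r := by positivity
  have h3 : ∀ x y : ℕ, (x : ℤ) * r < (y : ℤ) * r ↔ (x < y ∧ 0 < r) := by
    intro x y
    constructor
    · intro h
      have hxy : (x:ℤ) < y := by
        by_contra hc
        exact absurd (mul_le_mul_of_nonneg_right (not_lt.mp hc) (by positivity)) (not_le.mpr h)
      constructor
      · exact_mod_cast hxy
      · rcases Nat.eq_zero_or_pos r with h0 | h0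
        · simp [h0] at h
        · exact h0
    · rintro ⟨h, hr0⟩
      have h5 : ((x:ℤ)+1) * r ≤ (y:ℤ) * r := by
        apply mul_le_mul_of_nonneg_right _ (by positivity)
        exact_mod_cast h
      have hr0' : (1:ℤ) ≤ r := by exact_mod_cast hr0
      nlinarith
  have h4 : (a1 : ℤ) * r + r ≤ (b1:ℤ) * r ∨ (a1:ℤ)*r = (b1:ℤ)*r ∨ (b1:ℤ)*r + r ≤ (a1:ℤ)*r := by
    rcases lt_trichotomy a1 b1 with h | h | h
    · left
      have : ((a1:ℤ)+1) * r ≤ (b1:ℤ) * r :=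
        mul_le_mul_of_nonneg_right (by exact_mod_cast h) (by positivity)
      linarith
    · right; left; rw [h]
    · right; right
      have : ((b1:ℤ)+1) * r ≤ (a1:ℤ) * r :=
        mul_le_mul_of_nonneg_right (by exact_mod_cast h) (by positivity)
      linarith
  split_ifs with hA hB hB
  · constructor
    · intro h; right; right; exact ⟨hA, hB, by exact_mod_cast h⟩
    · rintro (⟨h, _⟩ | ⟨h, _⟩ | ⟨_, _, h⟩) <;> first | omega | exact_mod_cast h
  · constructor
    · intro h
      exfalso
      have hb2 : 0 < b2 := Nat.pos_of_ne_zero hB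
      have : (0:ℤ) < b2 := by exact_mod_cast hb2
      have : (0:ℤ) ≤ a1 := by positivity
      omega
    · rintro (⟨h, _⟩ | ⟨_, h, _⟩ | ⟨_, h, _⟩) <;> omega
  · constructor
    · intro _; left; exact ⟨Nat.pos_of_ne_zero hA, hB⟩
    · intro _
      have ha2 : 0 < a2 := Nat.pos_of_ne_zero hA
      have : (0:ℤ) < a2 := by exact_mod_cast ha2
      have : (0:ℤ) ≤ b1 := by positivity
      omega
  · have ha2 : 0 < a2 := Nat.pos_of_ne_zero hA
    have hb2 : 0 < b2 := Nat.pos_of_ne_zero hB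
    have hcast : -((a1:ℤ)*r + a2) < -((b1:ℤ)*r + b2) ↔ (b1:ℤ)*r + b2 < (a1:ℤ)*r + a2 := by omega
    rw [hcast]
    have ha2' : (a2:ℤ) < r := by exact_mod_cast ha
    have hb2' : (b2:ℤ) < r := by exact_mod_cast hb
    have ha2'' : (0:ℤ) < a2 := by exact_mod_cast ha2
    have hb2'' : (0:ℤ) < b2 := by exact_mod_cast hb2
    constructor
    · intro h
      right; left
      refine ⟨ha2, hb2, ?_⟩
      have : (b1:ℤ)*r < (a1:ℤ)*r ∨ ((b1:ℤ)*r = (a1:ℤ)*r ∧ (b2:ℤ) < a2) := by omega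
      rcases this with h' | ⟨h', h''⟩
      · left; exact ((h3 b1 a1).mp h').1
      · right
        have hb1a1 : b1 = a1 := by
          by_contra hne
          rcases Nat.lt_or_ge b1 a1 with hlt | hge
          · have := (h3 b1 a1).mpr ⟨hlt, by omega⟩; omega
          · have : a1 < b1 := by omega
            have := (h3 a1 b1).mpr ⟨this, by omega⟩; omega
        exact ⟨hb1a1.symm, by exact_mod_cast h''⟩
    · rintro (⟨_, h⟩ | ⟨_, _, (h | ⟨h, h'⟩)⟩ | ⟨h, _, _⟩)
      · omega
      · have := (h3 b1 a1).mpr ⟨h, by omega⟩; omega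
      · subst h
        have : (b2:ℤ) < a2 := by exact_mod_cast h'
        omega
      · omega

lemma keyE_inj {a b : ℕ × ℕ} (ha : a.2 < r) (hb : b.2 < r) (h : keyE r a = keyE r b) :
    a = b := by
  rcases clt_total a b with h' | h' | h'
  · exact h'
  · rw [← keyE_lt_iff ha hb] at h'; omega
  · rw [← keyE_lt_iff hb ha] at h'; omega



/-! ### window values and descents -/

lemma wval_succ (γ : CPerm r n) (i : Fin n) : wval γ ((i : ℕ) + 1) = entry γ i := by
  have hi := i.isLt
  simp only [wval, entry]
  rw [dif_pos ⟨by omega, by omega⟩]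
  congr 2 <;> exact congrArg _ (Fin.ext (by first | omega | (simp only [Fin.val_mk]; omega)))

lemma wval_zero (γ : CPerm r n) : wval γ 0 = (0, 0) := by simp [wval]

lemma wval_color_lt (hr : 0 < r) (γ : CPerm r n) (p : ℕ) : (wval γ p).2 < r := by
  unfold wval
  split_ifs
  · exact (γ.2 _).isLt
  · exact hr

lemma wval_inj (γ : CPerm r n) {p q : ℕ} (hp : p ≤ n) (hq : q ≤ n)
    (h : wval γ p = wval γ q) : p = q := by
  unfold wval at h
  split_ifs at h with h1 h2 h2
  · have := congrArg Prod.fst h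
    simp only at this
    have h3 : γ.1 ⟨p - 1, by omega⟩ = γ.1 ⟨q - 1, by omega⟩ := Fin.ext (by first | omega | (simp only [Fin.val_mk]; omega))
    have := γ.1.injective h3
    have := congrArg Fin.val this
    simp at this
    omega
  · have := congrArg Prod.fst h; simp at this
  · have := congrArg Prod.fst h; simp at this
  · omega

lemma mem_DesG {γ : CPerm r n} {d : ℕ} :
    d ∈ DesG γ ↔ d < n ∧ clt (wval γ (d + 1)) (wval γ d) := by
  simp [DesG, Finset.mem_filter, Finset.mem_range]

lemma not_mem_DesG {γ : CPerm r n} {d : ℕ} (hd : d < n) :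
    d ∉ DesG γ ↔ clt (wval γ d) (wval γ (d + 1)) := by
  rw [mem_DesG]
  constructor
  · intro h
    rcases clt_total (wval γ d) (wval γ (d+1)) with h' | h' | h'
    · exact absurd (wval_inj γ (by omega) (by omega) h') (by omega)
    · exact h'
    · exact absurd ⟨hd, h'⟩ h
  · intro h hc
    exact clt_asymm h hc.2

/-! ### nds -/

def nds (γ : CPerm r n) (p : ℕ) : ℕ := ((DesG γ).filter fun d => p < d).card

lemma nds_succ (γ : CPerm r n) (p : ℕ) :
    nds γ p = nds γ (p + 1) + (if (p + 1) ∈ DesG γ then 1 else 0) := by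
  unfold nds
  have h1 : (DesG γ).filter (fun d => p < d)
      = ((DesG γ).filter fun d => p + 1 < d) ∪ ((DesG γ).filter fun d => d = p + 1) := by
    rw [← Finset.filter_or]
    exact Finset.filter_congr (by intro x _; constructor <;> intro h <;> omega)
  rw [h1, Finset.card_union_of_disjoint]
  · congr 1
    rw [Finset.filter_eq']
    split_ifs <;> simp
  · rw [Finset.disjoint_left]
    intro a ha hb
    simp only [Finset.mem_filter] at ha hb
    omega

lemma nds_le_des (γ : CPerm r n) (p : ℕ) : nds γ p ≤ desG γ := Finset.card_filter_le _ _

lemma nds_lt_des (γ : CPerm r n) {p d : ℕ} (hd : d ∈ DesG γ) (hdp : d ≤ p) :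
    nds γ p < desG γ := by
  apply Finset.card_lt_card
  rw [Finset.ssubset_iff_of_subset (Finset.filter_subset _ _)]
  exact ⟨d, hd, by simp; omega⟩

lemma des_eq_nds_zero (γ : CPerm r n) :
    desG γ = nds γ 0 + (if 0 ∈ DesG γ then 1 else 0) := by
  unfold desG nds
  have h1 : DesG γ = ((DesG γ).filter fun d => 0 < d) ∪ ((DesG γ).filter fun d => d = 0) := by
    rw [← Finset.filter_or]
    rw [Finset.filter_true_of_mem (by intro x _; omega)]
  nth_rewrite 1 [h1]
  rw [Finset.card_union_of_disjoint]
  · congr 1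
    rw [Finset.filter_eq']
    split_ifs <;> simp
  · rw [Finset.disjoint_left]
    intro a ha hb
    simp only [Finset.mem_filter] at ha hb
    omega

lemma sum_nds (γ : CPerm r n) : ∑ i : Fin n, nds γ (i : ℕ) = majG γ := by
  unfold nds majG
  have h1 : ∀ i : Fin n, ((DesG γ).filter fun d => (i:ℕ) < d).card
      = ∑ d ∈ DesG γ, if (i:ℕ) < d then 1 else 0 := by
    intro i; rw [Finset.card_filter]
  simp_rw [h1]
  rw [Finset.sum_comm]
  apply Finset.sum_congr rfl
  intro d hd
  have hdn : d < n := (mem_DesG.mp hd).1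
  rw [Fin.sum_univ_eq_sum_range (fun i => if i < d then 1 else 0)]
  rw [← Finset.card_filter]
  have h2 : (range n).filter (fun i => i < d) = range d := by
    ext x; simp [Finset.mem_range]; omega
  rw [h2, Finset.card_range]



/-! ### generic Fin helpers -/

lemma strictMonoFin_of_consec {α : Type*} [Preorder α] {f : Fin n → α}
    (h : ∀ p, (hp : p + 1 < n) → f ⟨p, by omega⟩ < f ⟨p + 1, hp⟩) : StrictMono f := by
  have key : ∀ t : ℕ, ∀ i j : Fin n, (j : ℕ) = (i : ℕ) + t + 1 → f i < f j := by
    intro t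
    induction t with
    | zero =>
      intro i j hj
      have hp : (i : ℕ) + 1 < n := by have := j.isLt; omega
      have h1 := h (i : ℕ) hp
      have e1 : (⟨(i : ℕ), by omega⟩ : Fin n) = i := Fin.ext rfl
      have e2 : (⟨(i : ℕ) + 1, hp⟩ : Fin n) = j := Fin.ext (by first | omega | (simp only [Fin.val_mk]; omega))
      rwa [e1, e2] at h1
    | succ t ih =>
      intro i j hj
      have hmid : (i : ℕ) + t + 1 < n := by have := j.isLt; omega
      have h1 := ih i ⟨(i : ℕ) + t + 1, hmid⟩ rfl
      have hp : (i : ℕ) + t + 1 + 1 < n := by have := j.isLt; omega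
      have h2 := h ((i : ℕ) + t + 1) hp
      have e1 : (⟨(i : ℕ) + t + 1, by omega⟩ : Fin n) = (⟨(i : ℕ) + t + 1, hmid⟩ : Fin n) :=
        Fin.ext rfl
      have e2 : (⟨(i : ℕ) + t + 1 + 1, hp⟩ : Fin n) = j := Fin.ext (by first | omega | (simp only [Fin.val_mk]; omega))
      rw [e1, e2] at h2
      exact lt_trans h1 h2
  intro i j hij
  exact key ((j : ℕ) - (i : ℕ) - 1) i j (by have := (Fin.lt_def).mp hij; omega)

lemma antitoneFin_of_consec {f : Fin n → ℕ}
    (h : ∀ p, (hp : p + 1 < n) → f ⟨p + 1, hp⟩ ≤ f ⟨p, by omega⟩) :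
    ∀ i j : Fin n, i ≤ j → f j ≤ f i := by
  have key : ∀ t : ℕ, ∀ i j : Fin n, (j : ℕ) = (i : ℕ) + t → f j ≤ f i := by
    intro t
    induction t with
    | zero => intro i j hj; have : j = i := Fin.ext (by first | omega | (simp only [Fin.val_mk]; omega)); rw [this]
    | succ t ih =>
      intro i j hj
      have hmid : (i : ℕ) + t < n := by have := j.isLt; omega
      have h1 := ih i ⟨(i : ℕ) + t, hmid⟩ rfl
      have hp : (i : ℕ) + t + 1 < n := by have := j.isLt; omega
      have h2 := h ((i : ℕ) + t) hp
      have e1 : (⟨(i : ℕ) + t, by omega⟩ : Fin n) = (⟨(i : ℕ) + t, hmid⟩ : Fin n) := Fin.ext rfl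
      have e2 : (⟨(i : ℕ) + t + 1, hp⟩ : Fin n) = j := Fin.ext (by first | omega | (simp only [Fin.val_mk]; omega))
      rw [e1, e2] at h2
      exact le_trans h2 h1
  intro i j hij
  exact key ((j : ℕ) - (i : ℕ)) i j (by have := (Fin.le_def).mp hij; omega)

/-! ### the letter alphabet and the two sides -/

def AkF (r k : ℕ) : Finset (ℕ × ℕ) :=
  (range (k + 1)) ×ˢ {0} ∪ (range k) ×ˢ ((range (r - 1)).map ⟨Nat.succ, Nat.succ_injective⟩)

lemma mem_AkF (hr : 0 < r) {k : ℕ} {e : ℕ × ℕ} :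
    e ∈ AkF r k ↔ ((e.2 = 0 ∧ e.1 ≤ k) ∨ (0 < e.2 ∧ e.2 < r ∧ e.1 < k)) := by
  rcases e with ⟨v, c⟩
  simp only [AkF, Finset.mem_union, Finset.mem_product, Finset.mem_singleton, Finset.mem_map,
    Finset.mem_range, Function.Embedding.coeFn_mk]
  constructor
  · rintro (⟨h1, h2⟩ | ⟨h1, a, ha, hac⟩)
    · left; exact ⟨h2, by omega⟩
    · right; omega
  · rintro (⟨h1, h2⟩ | ⟨h1, h2, h3⟩)
    · left; exact ⟨by omega, h1⟩
    · right; exact ⟨h3, c - 1, by omega, by omega⟩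

def Wset (r n k m s : ℕ) : Finset (Fin n → ℕ × ℕ) :=
  (Fintype.piFinset fun _ : Fin n => AkF r k).filter fun g =>
    (∑ i, (g i).1) = m ∧ (∑ i, (g i).2) = s

def Tpred (k m s : ℕ) (γ : CPerm r n) (l : Fin n → ℕ) : Prop :=
  (∀ i j : Fin n, i ≤ j → l j ≤ l i) ∧ (∀ i, l i + desG γ ≤ k) ∧
    (majG γ + ∑ i, l i = m) ∧ colG γ = s

instance {k m s : ℕ} (γ : CPerm r n) (l : Fin n → ℕ) : Decidable (Tpred k m s γ l) := by
  unfold Tpred; infer_instance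

def Tset (r n k m s : ℕ) : Finset (CPerm r n × (Fin n → ℕ)) :=
  ((univ : Finset (CPerm r n)) ×ˢ (Fintype.piFinset fun _ : Fin n => range (k + 1))).filter
    fun gl => Tpred k m s gl.1 gl.2

def Phi (γ : CPerm r n) (l : Fin n → ℕ) : Fin n → ℕ × ℕ :=
  fun j => (l (γ.1⁻¹ j) + nds γ (γ.1⁻¹ j), (γ.2 (γ.1⁻¹ j) : ℕ))

def posKey (r : ℕ) (g : Fin n → ℕ × ℕ) (j : Fin n) : ℤ ×ₗ ℤ :=
  toLex (-((g j).1 : ℤ), keyE r ((j : ℕ) + 1, (g j).2))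

lemma posKey_inj {g : Fin n → ℕ × ℕ} (hc : ∀ j, (g j).2 < r) :
    Function.Injective (posKey r g) := by
  intro j j' h
  unfold posKey at h
  have h2 : keyE r ((j : ℕ) + 1, (g j).2) = keyE r ((j' : ℕ) + 1, (g j').2) :=
    congrArg (fun x => (ofLex x).2) h
  have h3 := keyE_inj (a := ((j : ℕ) + 1, (g j).2)) (b := ((j' : ℕ) + 1, (g j').2))
    (hc j) (hc j') h2
  have h4 := congrArg Prod.fst h3
  simp only at h4
  exact Fin.ext (by first | omega | (simp only [Fin.val_mk]; omega))

lemma posKey_entry (γ : CPerm r n) (l : Fin n → ℕ) (i : Fin n) :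
    posKey r (Phi γ l) (γ.1 i) =
      toLex (-((l i + nds γ (i : ℕ) : ℕ) : ℤ), keyE r (entry γ i)) := by
  simp [posKey, Phi, Equiv.Perm.coe_inv, Equiv.symm_apply_apply, entry]

lemma entry_color_lt (γ : CPerm r n) (i : Fin n) : (entry γ i).2 < r := (γ.2 i).isLt

lemma phi_sorted (γ : CPerm r n) (l : Fin n → ℕ)
    (hanti : ∀ i j : Fin n, i ≤ j → l j ≤ l i) :
    StrictMono (fun i : Fin n => posKey r (Phi γ l) (γ.1 i)) := by
  apply strictMonoFin_of_consec
  intro p hp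
  rw [posKey_entry, posKey_entry, Prod.Lex.lt_iff]
  have hrec := nds_succ γ p
  have hl := hanti ⟨p, by omega⟩ ⟨p + 1, hp⟩ (by simp [Fin.le_def])
  by_cases hdes : (p + 1) ∈ DesG γ
  · left
    rw [if_pos hdes] at hrec
    simp only [ofLex_toLex]
    have : l ⟨p + 1, hp⟩ + nds γ ((⟨p + 1, hp⟩ : Fin n) : ℕ) <
        l ⟨p, by omega⟩ + nds γ ((⟨p, by omega⟩ : Fin n) : ℕ) := by
      simp only
      omega
    push_cast
    omega
  · rw [if_neg hdes] at hrec
    have hv : l ⟨p + 1, hp⟩ + nds γ (p + 1) ≤ l ⟨p, by omega⟩ + nds γ p := by omega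
    rcases Nat.lt_or_ge (l ⟨p + 1, hp⟩ + nds γ (p + 1)) (l ⟨p, by omega⟩ + nds γ p) with hlt | hge
    · left
      simp only [ofLex_toLex]
      push_cast
      omega
    · right
      constructor
      · simp only [ofLex_toLex]
        push_cast
        omega
      · have hchain := (not_mem_DesG (by omega)).mp hdes
        have e1 : wval γ (p + 1) = entry γ ⟨p, by omega⟩ := wval_succ γ ⟨p, by omega⟩
        have e2 : wval γ (p + 1 + 1) = entry γ ⟨p + 1, hp⟩ := wval_succ γ ⟨p + 1, hp⟩
        rw [e1, e2] at hchain
        exact (keyE_lt_iff (entry_color_lt _ _) (entry_color_lt _ _)).mpr hchain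

lemma keyE_neg_color {e : ℕ × ℕ} (h : keyE r e < 0) : e.2 ≠ 0 := by
  intro hc
  rw [keyE, if_pos hc] at h
  omega

lemma keyE_nonneg_color {e : ℕ × ℕ} (h : e.2 = 0) : 0 ≤ keyE r e := by
  rw [keyE, if_pos h]
  positivity

lemma colored_descent (γ : CPerm r n) (i : Fin n) (h : (γ.2 i : ℕ) ≠ 0) :
    ∃ d ∈ DesG γ, d ≤ (i : ℕ) := by
  by_contra hcon
  push_neg at hcon
  have chain : ∀ p : ℕ, p ≤ (i : ℕ) + 1 → (wval γ p).2 = 0 := by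
    intro p
    induction p with
    | zero => intro _; rw [wval_zero]
    | succ q ih =>
      intro hq
      have hq' : q ≤ (i : ℕ) + 1 := by omega
      have hiq := ih (by omega)
      have hqn : q < n := by have := i.isLt; omega
      have hnd : q ∉ DesG γ := by
        intro hmem
        exact absurd (hcon q hmem) (by omega)
      have hclt := (not_mem_DesG hqn).mp hnd
      have hkey := (keyE_lt_iff (r := r) (wval_color_lt (by
        have := (γ.2 i).isLt; omega) γ q) (wval_color_lt (by
        have := (γ.2 i).isLt; omega) γ (q + 1))).mpr hclt
      have h0 : (0 : ℤ) ≤ keyE r (wval γ q) := keyE_nonneg_color hiq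
      by_contra hne
      have : keyE r (wval γ (q + 1)) < 0 := by
        rcases Nat.eq_zero_or_pos ((wval γ (q + 1)).2) with h' | h'
        · exact absurd h' hne
        · rw [keyE, if_neg (by omega)]
          have hp : (0:ℤ) ≤ ((wval γ (q+1)).1 : ℤ) * r := by positivity
          have : (0:ℤ) < ((wval γ (q+1)).2 : ℤ) := by exact_mod_cast h'
          omega
      omega
  have := chain ((i : ℕ) + 1) (le_refl _)
  rw [wval_succ γ i] at this
  exact h this

lemma phi_mem_W (hr : 0 < r) {k m s : ℕ} (γ : CPerm r n) (l : Fin n → ℕ)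
    (hT : Tpred k m s γ l) : Phi γ l ∈ Wset r n k m s := by
  obtain ⟨hanti, hbound, hsum, hcol⟩ := hT
  rw [Wset, Finset.mem_filter, Fintype.mem_piFinset]
  refine ⟨fun j => ?_, ?_, ?_⟩
  · rw [mem_AkF hr]
    simp only [Phi]
    rcases Nat.eq_zero_or_pos ((γ.2 (γ.1⁻¹ j) : ℕ)) with hc | hc
    · left
      refine ⟨hc, ?_⟩
      have h1 := hbound (γ.1⁻¹ j)
      have h2 := nds_le_des γ ((γ.1⁻¹ j : Fin n) : ℕ)
      omega
    · right
      refine ⟨hc, (γ.2 (γ.1⁻¹ j)).isLt, ?_⟩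
      obtain ⟨d, hd, hdi⟩ := colored_descent γ (γ.1⁻¹ j) (by omega)
      have h1 := nds_lt_des γ hd hdi
      have h2 := hbound (γ.1⁻¹ j)
      omega
  · rw [← Equiv.sum_comp γ.1 (fun j => (Phi γ l j).1)]
    simp only [Phi, Equiv.Perm.coe_inv, Equiv.symm_apply_apply]
    rw [Finset.sum_add_distrib, sum_nds]
    omega
  · rw [← Equiv.sum_comp γ.1 (fun j => (Phi γ l j).2)]
    simp only [Phi, Equiv.Perm.coe_inv, Equiv.symm_apply_apply]
    rw [← hcol, colG]

lemma phi_injective {k m s : ℕ} {γ γ' : CPerm r n} {l l' : Fin n → ℕ}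
    (hT : Tpred k m s γ l) (hT' : Tpred k m s γ' l')
    (heq : Phi γ l = Phi γ' l') : γ = γ' ∧ l = l' := by
  have hc : ∀ j, ((Phi γ l j).2) < r := fun j => (γ.2 _).isLt
  have hsm : StrictMono (posKey r (Phi γ l) ∘ γ.1) := phi_sorted γ l hT.1
  have hsm' : StrictMono (posKey r (Phi γ l) ∘ γ'.1) := by
    rw [heq]
    exact phi_sorted γ' l' hT'.1
  haveI : WellFoundedLT (Fin n) := Finite.to_wellFoundedLT
  have hrange : Set.range (posKey r (Phi γ l) ∘ γ.1)
      = Set.range (posKey r (Phi γ l) ∘ γ'.1) := by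
    rw [Function.Surjective.range_comp γ.1.surjective, Function.Surjective.range_comp
      γ'.1.surjective]
  have hcomp : posKey r (Phi γ l) ∘ γ.1 = posKey r (Phi γ l) ∘ γ'.1 :=
    (StrictMono.range_inj hsm hsm').1 hrange
  have hperm : γ.1 = γ'.1 := by
    apply Equiv.ext
    intro i
    exact posKey_inj hc (congrFun hcomp i)
  have hcols : γ.2 = γ'.2 := by
    funext i
    have h1 := congrFun heq (γ.1 i)
    have h2 : (Phi γ l (γ.1 i)).2 = (γ.2 i : ℕ) := by
      simp [Phi, Equiv.Perm.coe_inv, Equiv.symm_apply_apply]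
    have h3 : (Phi γ' l' (γ.1 i)).2 = (γ'.2 i : ℕ) := by
      rw [hperm]
      simp [Phi, Equiv.Perm.coe_inv, Equiv.symm_apply_apply]
    apply Fin.ext
    rw [← h2, ← h3, h1]
  have hγ : γ = γ' := Prod.ext hperm hcols
  subst hγ
  refine ⟨rfl, ?_⟩
  funext i
  have h1 := congrFun heq (γ.1 i)
  have h2 : (Phi γ l (γ.1 i)).1 = l i + nds γ (i : ℕ) := by
    simp [Phi, Equiv.Perm.coe_inv, Equiv.symm_apply_apply]
  have h3 : (Phi γ l' (γ.1 i)).1 = l' i + nds γ (i : ℕ) := by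
    simp [Phi, Equiv.Perm.coe_inv, Equiv.symm_apply_apply]
  have := congrArg Prod.fst h1
  rw [h2, h3] at this
  omega

lemma phi_surjective (hr : 0 < r) (hn : 0 < n) {k m s : ℕ} {g : Fin n → ℕ × ℕ}
    (hg : g ∈ Wset r n k m s) :
    ∃ γ : CPerm r n, ∃ l : Fin n → ℕ, Tpred k m s γ l ∧ (∀ i, l i ≤ k) ∧ Phi γ l = g := by
  rw [Wset, Finset.mem_filter, Fintype.mem_piFinset] at hg
  obtain ⟨hmem, hsum1, hsum2⟩ := hg
  have hc : ∀ j, (g j).2 < r := by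
    intro j
    rcases (mem_AkF hr).mp (hmem j) with ⟨h1, _⟩ | ⟨_, h2, _⟩
    · omega
    · exact h2
  have hv : ∀ j, (g j).1 ≤ k := by
    intro j
    rcases (mem_AkF hr).mp (hmem j) with ⟨_, h1⟩ | ⟨_, _, h1⟩ <;> omega
  have hvc : ∀ j, (g j).2 ≠ 0 → (g j).1 < k := by
    intro j hj
    rcases (mem_AkF hr).mp (hmem j) with ⟨h1, _⟩ | ⟨_, _, h1⟩
    · exact absurd h1 hj
    · exact h1
  set σ : Equiv.Perm (Fin n) := Tuple.sort (posKey r g) with hσ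
  set γ : CPerm r n := (σ, fun i => ⟨(g (σ i)).2, hc _⟩) with hγ
  set V : Fin n → ℕ := fun i => (g (σ i)).1 with hV
  have hsm : StrictMono (posKey r g ∘ σ) :=
    (Tuple.monotone_sort _).strictMono_of_injective ((posKey_inj hc).comp σ.injective)
  have hkey : ∀ i : Fin n, posKey r g (σ i) = toLex (-(V i : ℤ), keyE r (entry γ i)) := by
    intro i
    simp [posKey, entry, hγ, hV]
  have hVmono : ∀ i j : Fin n, i ≤ j → V j ≤ V i := by
    intro i j hij
    rcases eq_or_lt_of_le hij with h | h
    · rw [h]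
    · have := hsm h
      simp only [Function.comp_apply] at this
      rw [hkey, hkey, Prod.Lex.lt_iff] at this
      rcases this with h' | ⟨h', _⟩
      · simp only [ofLex_toLex] at h'
        exact_mod_cast Int.le_of_neg_le_neg (le_of_lt h')
      · simp only [ofLex_toLex] at h'
        have : (V i : ℤ) = (V j : ℤ) := by omega
        exact_mod_cast le_of_eq this.symm
  have hdes_strict : ∀ p, (hp : p + 1 < n) → (p + 1) ∈ DesG γ →
      V ⟨p + 1, hp⟩ < V ⟨p, by omega⟩ := by
    intro p hp hdes
    have hclt := (mem_DesG.mp hdes).2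
    have e1 : wval γ (p + 1) = entry γ ⟨p, by omega⟩ := wval_succ γ ⟨p, by omega⟩
    have e2 : wval γ (p + 1 + 1) = entry γ ⟨p + 1, hp⟩ := wval_succ γ ⟨p + 1, hp⟩
    rw [e2, e1] at hclt
    have hkeylt := (keyE_lt_iff (entry_color_lt γ _) (entry_color_lt γ _)).mpr hclt
    have hmono := hsm (show (⟨p, by omega⟩ : Fin n) < ⟨p + 1, hp⟩ by simp [Fin.lt_def])
    simp only [Function.comp_apply] at hmono
    rw [hkey, hkey, Prod.Lex.lt_iff] at hmono
    rcases hmono with h' | ⟨_, h'⟩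
    · simp only [ofLex_toLex] at h'
      have hle := hVmono ⟨p, by omega⟩ ⟨p + 1, hp⟩ (by simp [Fin.le_def])
      have : (V ⟨p+1, hp⟩ : ℤ) < (V ⟨p, by omega⟩ : ℤ) := by omega
      exact_mod_cast this
    · simp only [ofLex_toLex] at h'
      omega
  have hdes0 : 0 ∈ DesG γ → V ⟨0, hn⟩ < k := by
    intro hdes
    have hclt := (mem_DesG.mp hdes).2
    rw [wval_zero] at hclt
    have e1 : wval γ (0 + 1) = entry γ ⟨0, hn⟩ := wval_succ γ ⟨0, hn⟩
    rw [e1] at hclt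
    have hcol : (entry γ ⟨0, hn⟩).2 ≠ 0 := by
      rcases hclt with ⟨h1, _⟩ | ⟨_, h2, _⟩ | ⟨_, _, h3⟩
      · omega
      · simp at h2
      · simp at h3
    apply hvc
    exact hcol
  have hF4 : ∀ i : Fin n, nds γ (i : ℕ) ≤ V i := by
    have key : ∀ t : ℕ, ∀ i : Fin n, n - 1 - (i : ℕ) = t → nds γ (i : ℕ) ≤ V i := by
      intro t
      induction t with
      | zero =>
        intro i hi
        have hlast : (i : ℕ) = n - 1 := by have := i.isLt; omega
        have : nds γ (i : ℕ) = 0 := by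
          rw [nds, Finset.card_eq_zero, Finset.filter_eq_empty_iff]
          intro d hd
          have := (mem_DesG.mp hd).1
          omega
        omega
      | succ t ih =>
        intro i hi
        have hp : (i : ℕ) + 1 < n := by have := i.isLt; omega
        have h1 := ih ⟨(i : ℕ) + 1, hp⟩ (by simp; omega)
        have hrec := nds_succ γ (i : ℕ)
        by_cases hdes : ((i : ℕ) + 1) ∈ DesG γ
        · have h2 := hdes_strict (i : ℕ) hp hdes
          have e1 : (⟨(i : ℕ), by omega⟩ : Fin n) = i := Fin.ext rfl
          rw [e1] at h2
          rw [if_pos hdes] at hrec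
          simp only [Fin.val_mk] at h1 h2 hrec ⊢
          omega
        · have h2 := hVmono i ⟨(i : ℕ) + 1, hp⟩ (by simp [Fin.le_def])
          rw [if_neg hdes] at hrec
          simp only [Fin.val_mk] at h1 h2 hrec ⊢
          omega
    intro i
    exact key (n - 1 - (i : ℕ)) i rfl
  have hF5 : ∀ i : Fin n, V i + desG γ ≤ k + nds γ (i : ℕ) := by
    have key : ∀ t : ℕ, ∀ i : Fin n, (i : ℕ) = t → V i + desG γ ≤ k + nds γ (i : ℕ) := by
      intro t
      induction t with
      | zero =>
        intro i hi
        have hi0 : i = ⟨0, hn⟩ := Fin.ext (by first | omega | (simp only [Fin.val_mk]; omega))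
        subst hi0
        have h1 := des_eq_nds_zero γ
        by_cases hdes : 0 ∈ DesG γ
        · have h2 := hdes0 hdes
          rw [if_pos hdes] at h1
          simp only [Fin.val_mk] at h1 h2 ⊢
          omega
        · have h2 := hv (σ ⟨0, hn⟩)
          rw [if_neg hdes] at h1
          simp only [Fin.val_mk, hV] at h1 h2 ⊢
          omega
      | succ t ih =>
        intro i hi
        have ht : t < n := by have := i.isLt; omega
        have h1 := ih ⟨t, ht⟩ rfl
        have hrec := nds_succ γ t
        simp only at h1
        by_cases hdes : (t + 1) ∈ DesG γ
        · have hp : t + 1 < n := by have := i.isLt; omega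
          have h2 := hdes_strict t hp hdes
          have e1 : (⟨t + 1, hp⟩ : Fin n) = i := Fin.ext (by first | omega | (simp only [Fin.val_mk]; omega))
          rw [e1] at h2
          rw [if_pos hdes] at hrec
          rw [hi]
          omega
        · have hp : t + 1 < n := by have := i.isLt; omega
          have h2 := hVmono ⟨t, ht⟩ ⟨t + 1, hp⟩ (by simp [Fin.le_def])
          have e1 : (⟨t + 1, hp⟩ : Fin n) = i := Fin.ext (by first | omega | (simp only [Fin.val_mk]; omega))
          rw [e1] at h2
          rw [if_neg hdes] at hrec
          rw [hi]
          omega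
    intro i
    exact key (i : ℕ) i rfl
  set l : Fin n → ℕ := fun i => V i - nds γ (i : ℕ) with hl
  refine ⟨γ, l, ⟨?_, ?_, ?_, ?_⟩, ?_, ?_⟩
  · apply antitoneFin_of_consec
    intro p hp
    have hrec := nds_succ γ p
    have h4 := hF4 ⟨p + 1, hp⟩
    simp only [hl]
    by_cases hdes : (p + 1) ∈ DesG γ
    · have h2 := hdes_strict p hp hdes
      rw [if_pos hdes] at hrec
      simp only at h4 ⊢
      omega
    · have h2 := hVmono ⟨p, by omega⟩ ⟨p + 1, hp⟩ (by simp [Fin.le_def])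
      rw [if_neg hdes] at hrec
      simp only at h4 ⊢
      omega
  · intro i
    have := hF5 i
    have := hF4 i
    simp only [hl]
    omega
  · have hsv : ∑ i : Fin n, V i = m := by
      rw [← hsum1]
      exact Equiv.sum_comp σ (fun j => (g j).1)
    have : ∑ i : Fin n, (l i + nds γ (i : ℕ)) = ∑ i : Fin n, V i := by
      apply Finset.sum_congr rfl
      intro i _
      have := hF4 i
      simp only [hl]
      omega
    rw [Finset.sum_add_distrib, sum_nds] at this
    omega
  · rw [colG, ← hsum2]
    exact Equiv.sum_comp σ (fun j => (g j).2)
  · intro i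
    have := hv (σ i)
    simp only [hl, hV]
    omega
  · funext j
    have happ : σ (σ⁻¹ j) = j := Equiv.apply_symm_apply σ j
    have h4 := hF4 (σ⁻¹ j)
    have hVj : V (σ⁻¹ j) = (g j).1 := by
      simp only [hV]
      rw [happ]
    have hCj : (γ.2 (σ⁻¹ j) : ℕ) = (g j).2 := by
      simp only [hγ]
      show ((g (σ (σ⁻¹ j))).2) = (g j).2
      rw [happ]
    have hinv : γ.1⁻¹ j = σ⁻¹ j := rfl
    simp only [Phi, hinv, hl]
    apply Prod.ext
    · simp only
      omega
    · simp only
      exact hCj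

/-! ### partition counts -/

def Pcount (v K M : ℕ) : ℕ :=
  ((Fintype.piFinset fun _ : Fin v => range (K + 1)).filter fun l =>
    (∀ i j : Fin v, i ≤ j → l j ≤ l i) ∧ ∑ i, l i = M).card

lemma Pcount_zero (K M : ℕ) : Pcount 0 K M = if M = 0 then 1 else 0 := by
  unfold Pcount
  rcases Nat.eq_zero_or_pos M with h | h
  · subst h
    rw [if_pos rfl]
    rw [Finset.filter_true_of_mem]
    · simp [Fintype.card_piFinset]
    · intro l _
      refine ⟨fun i => i.elim0, by simp⟩
  · rw [if_neg (by omega)]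
    rw [Finset.card_eq_zero, Finset.filter_eq_empty_iff]
    intro l _
    rw [not_and]
    intro _
    simp
    omega

lemma Pcount_succ (v K M : ℕ) :
    Pcount (v + 1) K M = Pcount v K M +
      (if 1 ≤ K ∧ v + 1 ≤ M then Pcount (v + 1) (K - 1) (M - (v + 1)) else 0) := by
  classical
  unfold Pcount
  set S := (Fintype.piFinset fun _ : Fin (v+1) => range (K + 1)).filter fun l =>
    (∀ i j : Fin (v+1), i ≤ j → l j ≤ l i) ∧ ∑ i, l i = M with hS
  rw [← Finset.card_filter_add_card_filter_not
    (p := fun l => l (Fin.last v) = 0) (s := S)]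
  congr 1
  · -- last = 0 part ↔ Pcount v K M
    apply Finset.card_bij (fun l _ => Fin.init l)
    · intro l hl
      rw [Finset.mem_filter] at hl
      obtain ⟨hl, hlast⟩ := hl
      rw [hS, Finset.mem_filter, Fintype.mem_piFinset] at hl
      obtain ⟨hmem, hanti, hsum⟩ := hl
      rw [Finset.mem_filter, Fintype.mem_piFinset]
      refine ⟨fun i => hmem _, fun i j hij => hanti _ _ ?_, ?_⟩
      · rwa [Fin.castSucc_le_castSucc_iff]
      · rw [Fin.sum_univ_castSucc] at hsum
        rw [hlast, add_zero] at hsum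
        exact hsum
    · intro a ha b hb hab
      rw [Finset.mem_filter] at ha hb
      funext i
      refine Fin.lastCases ?_ ?_ i
      · rw [ha.2, hb.2]
      · intro j
        exact congrFun hab j
    · intro l' hl'
      rw [Finset.mem_filter, Fintype.mem_piFinset] at hl'
      obtain ⟨hmem, hanti, hsum⟩ := hl'
      refine ⟨Fin.snoc l' 0, ?_, ?_⟩
      · rw [Finset.mem_filter, hS, Finset.mem_filter, Fintype.mem_piFinset]
        refine ⟨⟨fun i => ?_, fun i j hij => ?_, ?_⟩, by simp⟩
        · refine Fin.lastCases ?_ ?_ i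
          · simp
          · intro j; simpa using hmem j
        · by_cases hj : j = Fin.last v
          · subst hj
            simp only [Fin.snoc_last]
            exact Nat.zero_le _
          · obtain ⟨j', rfl⟩ := Fin.exists_castSucc_eq.mpr hj
            have hi : i ≠ Fin.last v := by
              intro h
              subst h
              have := lt_of_le_of_lt hij (Fin.castSucc_lt_last j')
              exact absurd this (lt_irrefl _)
            obtain ⟨i', rfl⟩ := Fin.exists_castSucc_eq.mpr hi
            simp only [Fin.snoc_castSucc]
            exact hanti i' j' (by rwa [← Fin.castSucc_le_castSucc_iff])
        · rw [Fin.sum_univ_castSucc]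
          simp [hsum]
      · exact Fin.init_snoc _ _
  · -- last ≠ 0 part
    by_cases hcond : 1 ≤ K ∧ v + 1 ≤ M
    · rw [if_pos hcond]
      apply Finset.card_bij (fun l _ => fun i => l i - 1)
      · intro l hl
        rw [Finset.mem_filter] at hl
        obtain ⟨hl, hlast⟩ := hl
        rw [hS, Finset.mem_filter, Fintype.mem_piFinset] at hl
        obtain ⟨hmem, hanti, hsum⟩ := hl
        have hone : ∀ i, 1 ≤ l i := by
          intro i
          have := hanti i (Fin.last v) (Fin.le_last i)
          omega
        rw [Finset.mem_filter, Fintype.mem_piFinset]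
        refine ⟨fun i => ?_, fun i j hij => ?_, ?_⟩
        · show l i - 1 ∈ range (K - 1 + 1)
          have h1 := hmem i
          rw [Finset.mem_range] at h1 ⊢
          have := hone i
          omega
        · show l j - 1 ≤ l i - 1
          have := hanti i j hij
          omega
        · show ∑ i : Fin (v+1), (l i - 1) = M - (v + 1)
          have h2 : ∑ i : Fin (v+1), (l i - 1) + ∑ _i : Fin (v+1), 1 = ∑ i : Fin (v+1), l i := by
            rw [← Finset.sum_add_distrib]
            exact Finset.sum_congr rfl fun i _ => by have := hone i; omega
          simp only [Finset.sum_const, Finset.card_univ, Fintype.card_fin, smul_eq_mul,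
            mul_one] at h2
          omega
      · intro a ha b hb hab
        rw [Finset.mem_filter] at ha hb
        obtain ⟨ha', halast⟩ := ha
        obtain ⟨hb', hblast⟩ := hb
        rw [hS, Finset.mem_filter, Fintype.mem_piFinset] at ha' hb'
        have honea : ∀ i, 1 ≤ a i := by
          intro i
          have := ha'.2.1 i (Fin.last v) (Fin.le_last i)
          omega
        have honeb : ∀ i, 1 ≤ b i := by
          intro i
          have := hb'.2.1 i (Fin.last v) (Fin.le_last i)
          omega
        funext i
        have := congrFun hab i
        have h1 := honea i
        have h2 := honeb i
        omega
      · intro l' hl'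
        rw [Finset.mem_filter, Fintype.mem_piFinset] at hl'
        obtain ⟨hmem, hanti, hsum⟩ := hl'
        refine ⟨fun i => l' i + 1, ?_, by funext i; simp⟩
        rw [Finset.mem_filter, hS, Finset.mem_filter, Fintype.mem_piFinset]
        refine ⟨⟨fun i => ?_, fun i j hij => ?_, ?_⟩, by simp⟩
        · show l' i + 1 ∈ range (K + 1)
          have h1 := hmem i
          rw [Finset.mem_range] at h1 ⊢
          omega
        · show l' j + 1 ≤ l' i + 1
          have := hanti i j hij
          omega
        · show ∑ i : Fin (v+1), (l' i + 1) = M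
          rw [Finset.sum_add_distrib]
          simp only [Finset.sum_const, Finset.card_univ, Fintype.card_fin, smul_eq_mul, mul_one]
          omega
    · rw [if_neg hcond]
      rw [Finset.card_eq_zero, Finset.filter_eq_empty_iff]
      intro l hl
      rw [hS, Finset.mem_filter, Fintype.mem_piFinset] at hl
      obtain ⟨hmem, hanti, hsum⟩ := hl
      rw [not_not]
      by_contra hlast
      have hone : ∀ i, 1 ≤ l i := by
        intro i
        have := hanti i (Fin.last v) (Fin.le_last i)
        omega
      have hKge : 1 ≤ K := by
        have h1 := hmem (Fin.last v)
        rw [Finset.mem_range] at h1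
        have := hone (Fin.last v)
        omega
      have hMge : v + 1 ≤ M := by
        have : ∑ i : Fin (v+1), 1 ≤ ∑ i : Fin (v+1), l i := Finset.sum_le_sum (fun i _ => hone i)
        simp only [Finset.sum_const, Finset.card_univ, Fintype.card_fin, smul_eq_mul,
          mul_one] at this
        omega
      exact hcond ⟨hKge, hMge⟩

/-! ### coefficient helpers -/

lemma coeff_seriesOf3 (F : ℕ → ℕ → ℕ → ℚ) (d : Fin 3 →₀ ℕ) :
    MvPowerSeries.coeff d (seriesOf3 F) = F (d 0) (d 1) (d 2) := rfl

lemma fs3_apply0 (a b c : ℕ) :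
    ((Finsupp.single 0 a + Finsupp.single 1 b + Finsupp.single 2 c : Fin 3 →₀ ℕ)) 0 = a := by
  simp [Finsupp.single_apply]

lemma fs3_apply1 (a b c : ℕ) :
    ((Finsupp.single 0 a + Finsupp.single 1 b + Finsupp.single 2 c : Fin 3 →₀ ℕ)) 1 = b := by
  simp [Finsupp.single_apply]

lemma fs3_apply2 (a b c : ℕ) :
    ((Finsupp.single 0 a + Finsupp.single 1 b + Finsupp.single 2 c : Fin 3 →₀ ℕ)) 2 = c := by
  simp [Finsupp.single_apply]

lemma fin3_le {e d : Fin 3 →₀ ℕ} : e ≤ d ↔ (e 0 ≤ d 0 ∧ e 1 ≤ d 1 ∧ e 2 ≤ d 2) := by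
  rw [Finsupp.le_def]
  constructor
  · intro h; exact ⟨h 0, h 1, h 2⟩
  · rintro ⟨h0, h1, h2⟩ i
    fin_cases i <;> assumption

lemma coeff_X3_mul_seriesOf3 (F : ℕ → ℕ → ℕ → ℚ) (a b c : ℕ) (d : Fin 3 →₀ ℕ) :
    MvPowerSeries.coeff d
      ((MvPowerSeries.X 0 : MvPowerSeries (Fin 3) ℚ) ^ a * (MvPowerSeries.X 1) ^ b *
        (MvPowerSeries.X 2) ^ c * seriesOf3 F) =
      if a ≤ d 0 ∧ b ≤ d 1 ∧ c ≤ d 2 then F (d 0 - a) (d 1 - b) (d 2 - c) else 0 := by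
  rw [MvPowerSeries.X_pow_eq, MvPowerSeries.X_pow_eq, MvPowerSeries.X_pow_eq,
    MvPowerSeries.monomial_mul_monomial, MvPowerSeries.monomial_mul_monomial, one_mul, one_mul,
    MvPowerSeries.coeff_monomial_mul]
  have hiff : ((Finsupp.single 0 a + Finsupp.single 1 b + Finsupp.single 2 c : Fin 3 →₀ ℕ) ≤ d)
      ↔ (a ≤ d 0 ∧ b ≤ d 1 ∧ c ≤ d 2) := by
    rw [fin3_le, fs3_apply0, fs3_apply1, fs3_apply2]
  simp only [hiff]
  split_ifs with h
  · rw [one_mul, coeff_seriesOf3, Finsupp.tsub_apply, Finsupp.tsub_apply, Finsupp.tsub_apply,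
      fs3_apply0, fs3_apply1, fs3_apply2]
  · rfl

/-! ### the inverse series -/

def En (v : ℕ) : MvPowerSeries (Fin 3) ℚ :=
  seriesOf3 fun k m s => if s = 0 then (Pcount v k m : ℚ) else 0

lemma En_zero_mul : (1 - (MvPowerSeries.X 0 : MvPowerSeries (Fin 3) ℚ)) * En 0 = 1 := by
  apply MvPowerSeries.ext
  intro d
  rw [sub_mul, one_mul, map_sub]
  have h1 : (MvPowerSeries.X 0 : MvPowerSeries (Fin 3) ℚ) * En 0
      = (MvPowerSeries.X 0) ^ 1 * (MvPowerSeries.X 1) ^ 0 * (MvPowerSeries.X 2) ^ 0 * En 0 := by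
    ring
  rw [h1, En, coeff_X3_mul_seriesOf3, coeff_seriesOf3, MvPowerSeries.coeff_one]
  have hd : (d = 0) ↔ (d 0 = 0 ∧ d 1 = 0 ∧ d 2 = 0) := by
    constructor
    · intro h; subst h; simp
    · rintro ⟨h0, h1, h2⟩
      ext i
      fin_cases i <;> simpa
  have hd2 : (if d = 0 then (1:ℚ) else 0) = if (d 0 = 0 ∧ d 1 = 0 ∧ d 2 = 0) then 1 else 0 := by
    by_cases u : d = 0
    · rw [if_pos u, if_pos (hd.mp u)]
    · rw [if_neg u, if_neg (fun v => u (hd.mpr v))]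
  rw [hd2]
  simp only [Pcount_zero, Nat.sub_zero, Nat.cast_ite, Nat.cast_one, Nat.cast_zero]
  split_ifs <;> first | (exfalso; omega) | norm_num

lemma En_succ_mul (v : ℕ) :
    (1 - (MvPowerSeries.X 0 : MvPowerSeries (Fin 3) ℚ) * (MvPowerSeries.X 1) ^ (v + 1)) *
      En (v + 1) = En v := by
  apply MvPowerSeries.ext
  intro d
  rw [sub_mul, one_mul, map_sub]
  have h1 : (MvPowerSeries.X 0 : MvPowerSeries (Fin 3) ℚ) * (MvPowerSeries.X 1) ^ (v+1) * En (v+1)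
      = (MvPowerSeries.X 0) ^ 1 * (MvPowerSeries.X 1) ^ (v+1) * (MvPowerSeries.X 2) ^ 0
        * En (v+1) := by
    ring
  rw [h1, En, En, coeff_X3_mul_seriesOf3, coeff_seriesOf3, coeff_seriesOf3]
  simp only [Nat.sub_zero]
  have hrec := Pcount_succ v (d 0) (d 1)
  by_cases hs : d 2 = 0
  · simp only [hs, le_refl, and_true, if_true, eq_self_iff_true]
    by_cases hc : 1 ≤ d 0 ∧ v + 1 ≤ d 1
    · rw [if_pos hc] at hrec
      rw [if_pos hc]
      have hcast := congrArg (Nat.cast : ℕ → ℚ) hrec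
      push_cast at hcast
      linarith
    · rw [if_neg hc] at hrec
      rw [if_neg hc]
      have hcast := congrArg (Nat.cast : ℕ → ℚ) hrec
      push_cast at hcast
      linarith
  · simp [hs]

lemma prod_mul_En (N : ℕ) :
    (∏ i ∈ range (N + 1),
      (1 - (MvPowerSeries.X 0 : MvPowerSeries (Fin 3) ℚ) * (MvPowerSeries.X 1) ^ i)) * En N
      = 1 := by
  induction N with
  | zero =>
    rw [Finset.prod_range_one, pow_zero, mul_one]
    exact En_zero_mul
  | succ v ih =>
    rw [Finset.prod_range_succ, mul_assoc, En_succ_mul, ih]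

/-! ### the fiber cardinalities -/

lemma lam_card (hn : 0 < n) (γ : CPerm r n) (k m s : ℕ) :
    (((Fintype.piFinset fun _ : Fin n => range (k + 1)).filter fun l =>
        Tpred k m s γ l).card : ℚ)
      = if desG γ ≤ k ∧ majG γ ≤ m ∧ colG γ ≤ s then
          (if s - colG γ = 0 then (Pcount n (k - desG γ) (m - majG γ) : ℚ) else 0) else 0 := by
  by_cases h : desG γ ≤ k ∧ majG γ ≤ m ∧ colG γ = s
  · rw [if_pos ⟨h.1, h.2.1, le_of_eq h.2.2⟩, if_pos (by omega)]
    rw [Nat.cast_inj.mpr ?_]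
    unfold Pcount
    apply congrArg Finset.card
    ext l
    rw [Finset.mem_filter, Finset.mem_filter]
    simp only [Fintype.mem_piFinset, Finset.mem_range, Tpred]
    constructor
    · rintro ⟨hmem, hanti, hbd, hsum, hcol⟩
      exact ⟨fun i => by have := hbd i; omega, hanti, by omega⟩
    · rintro ⟨hmem, hanti, hsum⟩
      exact ⟨fun i => by have := hmem i; omega, hanti,
        fun i => by have := hmem i; omega, by omega, h.2.2⟩
  · have hcard : ((Fintype.piFinset fun _ : Fin n => range (k + 1)).filter fun l =>
        Tpred k m s γ l) = ∅ := by
      rw [Finset.filter_eq_empty_iff]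
      intro l _
      rintro ⟨hanti, hbd, hsum, hcol⟩
      have h1 := hbd ⟨0, hn⟩
      refine h ⟨?_, ?_, hcol⟩ <;> omega
    rw [hcard]
    simp only [Finset.card_empty, Nat.cast_zero]
    split_ifs with h1 h2
    · exfalso; omega
    · rfl
    · rfl

lemma Tcard (k m s : ℕ) : (Tset r n k m s).card
    = ∑ γ : CPerm r n, ((Fintype.piFinset fun _ : Fin n => range (k + 1)).filter fun l =>
        Tpred k m s γ l).card := by
  rw [Tset]
  rw [Finset.card_eq_sum_card_fiberwise (f := Prod.fst) (t := univ) (fun x _ => Finset.mem_univ _)]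
  apply Finset.sum_congr rfl
  intro γ _
  apply Finset.card_bij (fun a _ => a.2)
  · intro a ha
    simp only [Finset.mem_filter, Finset.mem_product, Finset.mem_univ, true_and] at ha
    obtain ⟨⟨hpi, hpred⟩, hfst⟩ := ha
    rw [Finset.mem_filter]
    rw [← hfst]
    exact ⟨hpi, hpred⟩
  · intro a ha b hb hab
    simp only [Finset.mem_filter] at ha hb
    have h1 : a.1 = γ := ha.2
    have h2 : b.1 = γ := hb.2
    exact Prod.ext (h1.trans h2.symm) hab
  · intro l hl
    rw [Finset.mem_filter] at hl
    refine ⟨(γ, l), ?_, rfl⟩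
    simp only [Finset.mem_filter, Finset.mem_product, Finset.mem_univ, true_and]
    exact ⟨⟨hl.1, hl.2⟩, trivial⟩

lemma Tcard_eq_Wcard (hr : 0 < r) (hn : 0 < n) (k m s : ℕ) :
    (Tset r n k m s).card = (Wset r n k m s).card := by
  apply Finset.card_bij (fun a _ => Phi a.1 a.2)
  · intro a ha
    exact phi_mem_W hr a.1 a.2 (Finset.mem_filter.mp ha).2
  · intro a ha b hb hab
    have := phi_injective (Finset.mem_filter.mp ha).2 (Finset.mem_filter.mp hb).2 hab
    exact Prod.ext this.1 this.2
  · intro g hg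
    obtain ⟨γ, l, hpred, hlk, hphi⟩ := phi_surjective hr hn hg
    refine ⟨(γ, l), ?_, hphi⟩
    rw [Tset, Finset.mem_filter, Finset.mem_product]
    refine ⟨⟨Finset.mem_univ _, ?_⟩, hpred⟩
    rw [Fintype.mem_piFinset]
    intro i
    rw [Finset.mem_range]
    show l i < k + 1
    have := hlk i
    omega

/-! ### the right-hand side polynomial -/

lemma fs2_apply0 (a b : ℕ) :
    ((Finsupp.single 0 a + Finsupp.single 1 b : Fin 2 →₀ ℕ)) 0 = a := by
  simp [Finsupp.single_apply]

lemma fs2_apply1 (a b : ℕ) :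
    ((Finsupp.single 0 a + Finsupp.single 1 b : Fin 2 →₀ ℕ)) 1 = b := by
  simp [Finsupp.single_apply]

lemma fs2_eq_iff {a b c e : ℕ} :
    (Finsupp.single 0 a + Finsupp.single 1 b : Fin 2 →₀ ℕ)
      = Finsupp.single 0 c + Finsupp.single 1 e ↔ (a = c ∧ b = e) := by
  constructor
  · intro h
    have h0 := DFunLike.congr_fun h 0
    have h1 := DFunLike.congr_fun h 1
    rw [show ((Finsupp.single 0 a + Finsupp.single 1 b : Fin 2 →₀ ℕ)) 0 = a from fs2_apply0 a b,
      show ((Finsupp.single 0 c + Finsupp.single 1 e : Fin 2 →₀ ℕ)) 0 = c from fs2_apply0 c e]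
      at h0
    rw [show ((Finsupp.single 0 a + Finsupp.single 1 b : Fin 2 →₀ ℕ)) 1 = b from fs2_apply1 a b,
      show ((Finsupp.single 0 c + Finsupp.single 1 e : Fin 2 →₀ ℕ)) 1 = e from fs2_apply1 c e]
      at h1
    exact ⟨h0, h1⟩
  · rintro ⟨rfl, rfl⟩
    rfl

lemma Bk_sum (hr : 0 < r) (k : ℕ) :
    (qint (MvPolynomial.X 0 : MvPolynomial (Fin 2) ℚ) (k + 1) +
        MvPolynomial.X 1 * qint (MvPolynomial.X 1) (r - 1) * qint (MvPolynomial.X 0) k)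
      = ∑ e ∈ AkF r k, (MvPolynomial.X 0 : MvPolynomial (Fin 2) ℚ) ^ e.1 *
          (MvPolynomial.X 1) ^ e.2 := by
  have hdisj : Disjoint ((range (k + 1)) ×ˢ ({0} : Finset ℕ))
      ((range k) ×ˢ ((range (r - 1)).map ⟨Nat.succ, Nat.succ_injective⟩)) := by
    rw [Finset.disjoint_left]
    rintro ⟨v, c⟩ h1 h2
    simp only [Finset.mem_product, Finset.mem_singleton, Finset.mem_map, Finset.mem_range,
      Function.Embedding.coeFn_mk] at h1 h2
    obtain ⟨_, a, _, ha⟩ := h2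
    omega
  rw [AkF, Finset.sum_union hdisj]
  congr 1
  · rw [Finset.sum_product, qint]
    apply Finset.sum_congr rfl
    intro v _
    simp
  · rw [Finset.sum_product, qint, qint]
    simp only [Finset.sum_map, Function.Embedding.coeFn_mk, Nat.succ_eq_add_one]
    rw [Finset.mul_sum]
    apply Finset.sum_congr rfl
    intro v _
    rw [Finset.mul_sum, Finset.sum_mul]
    apply Finset.sum_congr rfl
    intro j _
    rw [pow_succ]
    ring

lemma coeff_Bk_pow (hr : 0 < r) (k m s : ℕ) :
    MvPolynomial.coeff (Finsupp.single 0 m + Finsupp.single 1 s)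
      ((qint (MvPolynomial.X 0 : MvPolynomial (Fin 2) ℚ) (k + 1) +
        MvPolynomial.X 1 * qint (MvPolynomial.X 1) (r - 1) * qint (MvPolynomial.X 0) k) ^ n)
      = ((Wset r n k m s).card : ℚ) := by
  rw [Bk_sum hr]
  rw [show (∑ e ∈ AkF r k, (MvPolynomial.X 0 : MvPolynomial (Fin 2) ℚ) ^ e.1 *
      (MvPolynomial.X 1) ^ e.2) ^ n = ∏ _i : Fin n, ∑ e ∈ AkF r k,
        (MvPolynomial.X 0 : MvPolynomial (Fin 2) ℚ) ^ e.1 * (MvPolynomial.X 1) ^ e.2 from by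
    rw [Finset.prod_const, Finset.card_univ, Fintype.card_fin]]
  rw [Finset.prod_univ_sum]
  rw [MvPolynomial.coeff_sum]
  have hterm : ∀ g : Fin n → ℕ × ℕ,
      MvPolynomial.coeff (Finsupp.single 0 m + Finsupp.single 1 s)
        (∏ i : Fin n, (MvPolynomial.X 0 : MvPolynomial (Fin 2) ℚ) ^ (g i).1 *
          (MvPolynomial.X 1) ^ (g i).2)
      = if (∑ i, (g i).1) = m ∧ (∑ i, (g i).2) = s then 1 else 0 := by
    intro g
    rw [Finset.prod_mul_distrib, Finset.prod_pow_eq_pow_sum, Finset.prod_pow_eq_pow_sum]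
    rw [MvPolynomial.X_pow_eq_monomial, MvPolynomial.X_pow_eq_monomial,
      MvPolynomial.monomial_mul, one_mul, MvPolynomial.coeff_monomial]
    simp only [fs2_eq_iff]
  rw [Finset.sum_congr rfl (fun g _ => hterm g)]
  rw [Finset.sum_boole]
  rw [Wset]


/-- Chow–Gessel type identity for `G(r,n)`, equation (7.1):
`Σ_{γ ∈ G(r,n)} t^{des_G γ} q^{maj γ} a^{col γ} / (t;q)_{n+1}
  = Σ_{k≥0} t^k ([k+1]_q + a[r−1]_a [k]_q)^n`,
as formal power series in `t = X 0`, `q = X 1`, `a = X 2`. -/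
theorem stmt14 (r n : ℕ) (hr : 0 < r) (hn : 0 < n) :
    (∑ γ : CPerm r n,
        (MvPowerSeries.X 0 : MvPowerSeries (Fin 3) ℚ) ^ desG γ *
          (MvPowerSeries.X 1) ^ majG γ * (MvPowerSeries.X 2) ^ colG γ) *
      (∏ i ∈ range (n + 1),
        (1 - (MvPowerSeries.X 0 : MvPowerSeries (Fin 3) ℚ) * (MvPowerSeries.X 1) ^ i))⁻¹ =
      seriesOf3 fun k m s =>
        MvPolynomial.coeff (Finsupp.single 0 m + Finsupp.single 1 s)
          ((qint (MvPolynomial.X 0 : MvPolynomial (Fin 2) ℚ) (k + 1) +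
              MvPolynomial.X 1 * qint (MvPolynomial.X 1) (r - 1) *
                qint (MvPolynomial.X 0) k) ^ n) := by
  have hD : MvPowerSeries.constantCoeff
      (∏ i ∈ range (n + 1),
        (1 - (MvPowerSeries.X 0 : MvPowerSeries (Fin 3) ℚ) * (MvPowerSeries.X 1) ^ i)) ≠ 0 := by
    rw [map_prod]
    have hone : ∀ i ∈ range (n + 1), MvPowerSeries.constantCoeff
        (1 - (MvPowerSeries.X 0 : MvPowerSeries (Fin 3) ℚ) * (MvPowerSeries.X 1) ^ i) = 1 := by
      intro i _
      rw [map_sub, map_one, map_mul, MvPowerSeries.constantCoeff_X, zero_mul, sub_zero]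
    rw [Finset.prod_congr rfl hone, Finset.prod_const_one]
    norm_num
  have hinv : (∏ i ∈ range (n + 1),
      (1 - (MvPowerSeries.X 0 : MvPowerSeries (Fin 3) ℚ) * (MvPowerSeries.X 1) ^ i))⁻¹
      = En n := by
    rw [MvPowerSeries.inv_eq_iff_mul_eq_one hD, mul_comm]
    exact prod_mul_En n
  rw [hinv]
  apply MvPowerSeries.ext
  intro d
  rw [Finset.sum_mul, map_sum]
  have hterm : ∀ γ : CPerm r n,
      MvPowerSeries.coeff d
        ((MvPowerSeries.X 0 : MvPowerSeries (Fin 3) ℚ) ^ desG γ *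
          (MvPowerSeries.X 1) ^ majG γ * (MvPowerSeries.X 2) ^ colG γ * En n)
      = (((Fintype.piFinset fun _ : Fin n => range (d 0 + 1)).filter fun l =>
          Tpred (d 0) (d 1) (d 2) γ l).card : ℚ) := by
    intro γ
    rw [En, coeff_X3_mul_seriesOf3, lam_card hn γ (d 0) (d 1) (d 2)]
  rw [Finset.sum_congr rfl (fun γ _ => hterm γ)]
  rw [← Nat.cast_sum]
  rw [← Tcard (d 0) (d 1) (d 2)]
  rw [Tcard_eq_Wcard hr hn (d 0) (d 1) (d 2)]
  rw [coeff_seriesOf3]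
  exact (coeff_Bk_pow hr (d 0) (d 1) (d 2)).symm

end Paper
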